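/- Let n ≥ 2, let B(u,v,w) = diag[u^T A_1 v, ..., u^T A_n v] w for n×n real matrices A_1,...,A_n, let M = (∑_{i=1}^n |A_i|²)^{1/2} (Frobenius norms), and define G_B(u) = B(u,u,u)/|u| for u ≠ 0 and G_B(0) = 0. Then for all u, v in ℝ^n, |G_B(u) - G_B(v)| ≤ 2M (|u| + |v|) |u - v|. -/

import Mathlib

open Matrix Classical

/-- `B(u,v,w)` is the vector whose `i`-th component is `(uᵀ Aᵢ v) wᵢ`. -/
noncomputable def Bmap {n : ℕ} (A : Fin n → Matrix (Fin n) (Fin n) ℝ)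
    (u v w : EuclideanSpace ℝ (Fin n)) : EuclideanSpace ℝ (Fin n) :=
  WithLp.toLp 2 (fun i => (u ⬝ᵥ (A i).mulVec v) * w i)

/-- `G_B(u) = B(u,u,u)/|u|`, extended by `0` at the origin. -/

noncomputable def GB {n : ℕ} (A : Fin n → Matrix (Fin n) (Fin n) ℝ)
    (u : EuclideanSpace ℝ (Fin n)) : EuclideanSpace ℝ (Fin n) :=
  if u = 0 then 0 else ‖u‖⁻¹ • Bmap A u u u

section Aux

variable {n : ℕ} (A : Fin n → Matrix (Fin n) (Fin n) ℝ)

lemma norm_sq_eu (u : EuclideanSpace ℝ (Fin n)) : ‖u‖ ^ 2 = ∑ i, u i ^ 2 := by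
  rw [EuclideanSpace.norm_eq, Real.sq_sqrt (by positivity)]
  simp [sq_abs]

lemma dot_sq_le (B : Matrix (Fin n) (Fin n) ℝ) (u v : Fin n → ℝ) :
    (u ⬝ᵥ B.mulVec v) ^ 2 ≤ (∑ j, ∑ k, B j k ^ 2) * ((∑ j, u j ^ 2) * (∑ k, v k ^ 2)) := by
  have h1 : (u ⬝ᵥ B.mulVec v) ^ 2 ≤ (∑ j, u j ^ 2) * (∑ j, (B.mulVec v j) ^ 2) :=
    Finset.sum_mul_sq_le_sq_mul_sq Finset.univ u (B.mulVec v)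
  have h2 : ∑ j, (B.mulVec v j) ^ 2 ≤ ∑ j, (∑ k, B j k ^ 2) * (∑ k, v k ^ 2) := by
    refine Finset.sum_le_sum fun j _ => ?_
    exact Finset.sum_mul_sq_le_sq_mul_sq Finset.univ (B j) v
  have h3 : ∑ j, (∑ k, B j k ^ 2) * (∑ k, v k ^ 2) = (∑ j, ∑ k, B j k ^ 2) * (∑ k, v k ^ 2) := by
    rw [Finset.sum_mul]
  have hu : (0:ℝ) ≤ ∑ j, u j ^ 2 := Finset.sum_nonneg fun j _ => sq_nonneg _
  calc (u ⬝ᵥ B.mulVec v) ^ 2 ≤ (∑ j, u j ^ 2) * (∑ j, (B.mulVec v j) ^ 2) := h1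
    _ ≤ (∑ j, u j ^ 2) * ((∑ j, ∑ k, B j k ^ 2) * (∑ k, v k ^ 2)) := by
        rw [← h3]; exact mul_le_mul_of_nonneg_left h2 hu
    _ = (∑ j, ∑ k, B j k ^ 2) * ((∑ j, u j ^ 2) * (∑ k, v k ^ 2)) := by ring

lemma Bmap_norm_le (u v w : EuclideanSpace ℝ (Fin n)) :
    ‖Bmap A u v w‖ ≤ Real.sqrt (∑ i, ∑ j, ∑ k, (A i j k) ^ 2) * (‖u‖ * ‖v‖ * ‖w‖) := by
  have hM2nn : (0:ℝ) ≤ ∑ i, ∑ j, ∑ k, (A i j k) ^ 2 :=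
    Finset.sum_nonneg fun i _ => Finset.sum_nonneg fun j _ =>
      Finset.sum_nonneg fun k _ => sq_nonneg _
  have hX : (0:ℝ) ≤ ‖u‖ * ‖v‖ * ‖w‖ :=
    mul_nonneg (mul_nonneg (norm_nonneg u) (norm_nonneg v)) (norm_nonneg w)
  have hsq : ‖Bmap A u v w‖ ^ 2 ≤ (∑ i, ∑ j, ∑ k, (A i j k) ^ 2) * (‖u‖ * ‖v‖ * ‖w‖) ^ 2 := by
    rw [norm_sq_eu]
    have key : ∀ i, (Bmap A u v w i) ^ 2 ≤
        ((∑ j, ∑ k, (A i j k) ^ 2) * ((∑ j, u j ^ 2) * (∑ k, v k ^ 2))) * (∑ k, w k ^ 2) := by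
      intro i
      have h1 : (Bmap A u v w i) ^ 2 = (u ⬝ᵥ (A i).mulVec v) ^ 2 * (w i) ^ 2 := by
        simp only [Bmap, PiLp.toLp_apply]; ring
      have h2 : (w i) ^ 2 ≤ ∑ k, w k ^ 2 :=
        Finset.single_le_sum (f := fun k => w k ^ 2) (fun k _ => sq_nonneg _) (Finset.mem_univ i)
      rw [h1]
      exact mul_le_mul (dot_sq_le (A i) u v) h2 (sq_nonneg _) (by positivity)
    calc ∑ i, (Bmap A u v w i) ^ 2
        ≤ ∑ i, ((∑ j, ∑ k, (A i j k) ^ 2) * ((∑ j, u j ^ 2) * (∑ k, v k ^ 2))) * (∑ k, w k ^ 2) :=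
          Finset.sum_le_sum fun i _ => key i
      _ = (∑ i, ∑ j, ∑ k, (A i j k) ^ 2) * (((∑ j, u j ^ 2) * (∑ k, v k ^ 2)) * (∑ k, w k ^ 2)) := by
          rw [← Finset.sum_mul, ← Finset.sum_mul]; ring
      _ = (∑ i, ∑ j, ∑ k, (A i j k) ^ 2) * (‖u‖ * ‖v‖ * ‖w‖) ^ 2 := by
          rw [← norm_sq_eu, ← norm_sq_eu, ← norm_sq_eu]; ring
  calc ‖Bmap A u v w‖ = Real.sqrt (‖Bmap A u v w‖ ^ 2) := (Real.sqrt_sq (norm_nonneg _)).symm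
    _ ≤ Real.sqrt ((∑ i, ∑ j, ∑ k, (A i j k) ^ 2) * (‖u‖ * ‖v‖ * ‖w‖) ^ 2) :=
        Real.sqrt_le_sqrt hsq
    _ = Real.sqrt (∑ i, ∑ j, ∑ k, (A i j k) ^ 2) * (‖u‖ * ‖v‖ * ‖w‖) := by
        rw [Real.sqrt_mul hM2nn, Real.sqrt_sq hX]

lemma Bmap_sub1 (u v x y : EuclideanSpace ℝ (Fin n)) :
    Bmap A (u - v) x y = Bmap A u x y - Bmap A v x y := by
  ext i
  simp only [Bmap, PiLp.toLp_apply, PiLp.sub_apply, dotProduct, mulVec, sub_mul, mul_sub,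
    Finset.sum_sub_distrib, Finset.sum_mul]

lemma Bmap_sub2 (u v x y : EuclideanSpace ℝ (Fin n)) :
    Bmap A x (u - v) y = Bmap A x u y - Bmap A x v y := by
  ext i
  simp only [Bmap, PiLp.toLp_apply, PiLp.sub_apply, dotProduct, mulVec, sub_mul, mul_sub,
    Finset.sum_sub_distrib, Finset.sum_mul]

lemma Bmap_sub3 (u v x y : EuclideanSpace ℝ (Fin n)) :
    Bmap A x y (u - v) = Bmap A x y u - Bmap A x y v := by
  ext i
  simp only [Bmap, PiLp.toLp_apply, PiLp.sub_apply]
  ring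

lemma GB_aux (M : ℝ) (hM0 : 0 ≤ M)
    (hB : ∀ x y z : EuclideanSpace ℝ (Fin n), ‖Bmap A x y z‖ ≤ M * (‖x‖ * ‖y‖ * ‖z‖))
    (u v : EuclideanSpace ℝ (Fin n)) (hle : ‖v‖ ≤ ‖u‖) :
    ‖GB A u - GB A v‖ ≤ 2 * M * (‖u‖ + ‖v‖) * ‖u - v‖ := by
  by_cases hu : u = 0
  · have hv : v = 0 := by
      have : ‖v‖ ≤ 0 := by simpa [hu] using hle
      simpa using le_antisymm this (norm_nonneg v)
    simp [GB, hu, hv]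
  by_cases hv : v = 0
  · have ha : (0:ℝ) < ‖u‖ := norm_pos_iff.mpr hu
    rw [GB, if_neg hu, GB, if_pos hv, sub_zero, hv, sub_zero, norm_smul,
      Real.norm_eq_abs, abs_of_pos (inv_pos.mpr ha)]
    have h1 := hB u u u
    rw [inv_mul_le_iff₀ ha]
    simp only [norm_zero, add_zero]
    nlinarith [norm_nonneg u, mul_nonneg hM0 (mul_nonneg ha.le ha.le)]
  · have ha : (0:ℝ) < ‖u‖ := norm_pos_iff.mpr hu
    have hb : (0:ℝ) < ‖v‖ := norm_pos_iff.mpr hv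
    have hd0 : (0:ℝ) ≤ ‖u - v‖ := norm_nonneg _
    have hdec : GB A u - GB A v
        = ‖u‖⁻¹ • (Bmap A u u u - Bmap A v v v) + (‖u‖⁻¹ - ‖v‖⁻¹) • Bmap A v v v := by
      rw [GB, if_neg hu, GB, if_neg hv, smul_sub, sub_smul]
      abel
    have hfd : Bmap A u u u - Bmap A v v v
        = Bmap A (u - v) u u + Bmap A v (u - v) u + Bmap A v v (u - v) := by
      rw [Bmap_sub1, Bmap_sub2, Bmap_sub3]
      abel
    have h1 : ‖Bmap A u u u - Bmap A v v v‖
        ≤ M * (‖u - v‖ * ‖u‖ * ‖u‖) + M * (‖v‖ * ‖u - v‖ * ‖u‖) + M * (‖v‖ * ‖v‖ * ‖u - v‖) := by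
      rw [hfd]
      refine (norm_add₃_le).trans ?_
      have e1 := hB (u - v) u u
      have e2 := hB v (u - v) u
      have e3 := hB v v (u - v)
      nlinarith [e1, e2, e3]
    have habs : |‖u‖⁻¹ - ‖v‖⁻¹| ≤ ‖u - v‖ / (‖u‖ * ‖v‖) := by
      have heq : ‖u‖⁻¹ - ‖v‖⁻¹ = (‖v‖ - ‖u‖) / (‖u‖ * ‖v‖) := by
        field_simp
      have hba : |‖v‖ - ‖u‖| ≤ ‖u - v‖ := by
        calc |‖v‖ - ‖u‖| = |‖v‖ - ‖u‖| := rfl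
          _ ≤ ‖v - u‖ := abs_norm_sub_norm_le v u
          _ = ‖u - v‖ := by rw [norm_sub_rev]
      rw [heq, abs_div, abs_of_pos (mul_pos ha hb)]
      gcongr
    have hfv : ‖Bmap A v v v‖ ≤ M * (‖v‖ * ‖v‖ * ‖v‖) := hB v v v
    have h2 : ‖GB A u - GB A v‖
        ≤ ‖u‖⁻¹ * ‖Bmap A u u u - Bmap A v v v‖ + |‖u‖⁻¹ - ‖v‖⁻¹| * ‖Bmap A v v v‖ := by
      rw [hdec]
      refine (norm_add_le _ _).trans ?_
      rw [norm_smul, norm_smul, Real.norm_eq_abs, Real.norm_eq_abs,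
        abs_of_pos (inv_pos.mpr ha)]
    have k1 : ‖u‖⁻¹ * ‖Bmap A u u u - Bmap A v v v‖
        ≤ M * ‖u - v‖ * ‖u‖ + M * ‖u - v‖ * ‖v‖ + M * ‖u - v‖ * ‖v‖ := by
      refine le_trans (mul_le_mul_of_nonneg_left h1 (inv_pos.mpr ha).le) ?_
      rw [inv_mul_le_iff₀ ha]
      nlinarith [mul_nonneg (mul_nonneg hM0 hd0) hb.le, hle]
    have k2 : |‖u‖⁻¹ - ‖v‖⁻¹| * ‖Bmap A v v v‖ ≤ M * ‖u - v‖ * ‖v‖ := by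
      refine le_trans (mul_le_mul habs hfv (norm_nonneg _) (by positivity)) ?_
      rw [div_mul_eq_mul_div, div_le_iff₀ (mul_pos ha hb)]
      nlinarith [mul_nonneg (mul_nonneg hM0 hd0) (mul_nonneg hb.le hb.le), hle]
    calc ‖GB A u - GB A v‖
        ≤ ‖u‖⁻¹ * ‖Bmap A u u u - Bmap A v v v‖ + |‖u‖⁻¹ - ‖v‖⁻¹| * ‖Bmap A v v v‖ := h2
      _ ≤ (M * ‖u - v‖ * ‖u‖ + M * ‖u - v‖ * ‖v‖ + M * ‖u - v‖ * ‖v‖) + M * ‖u - v‖ * ‖v‖ :=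
          add_le_add k1 k2
      _ ≤ 2 * M * (‖u‖ + ‖v‖) * ‖u - v‖ := by
          nlinarith [mul_nonneg (mul_nonneg hM0 hd0) hb.le, hle]

end Aux

theorem norm_GB_sub_GB_le {n : ℕ} (hn : 2 ≤ n) (A : Fin n → Matrix (Fin n) (Fin n) ℝ)
    (M : ℝ) (hM : M = Real.sqrt (∑ i, ∑ j, ∑ k, (A i j k) ^ 2))
    (u v : EuclideanSpace ℝ (Fin n)) :
    ‖GB A u - GB A v‖ ≤ 2 * M * (‖u‖ + ‖v‖) * ‖u - v‖ := by
  have hM0 : 0 ≤ M := hM ▸ Real.sqrt_nonneg _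
  have hB : ∀ x y z : EuclideanSpace ℝ (Fin n), ‖Bmap A x y z‖ ≤ M * (‖x‖ * ‖y‖ * ‖z‖) :=
    fun x y z => hM ▸ Bmap_norm_le A x y z
  rcases le_total ‖v‖ ‖u‖ with h | h
  · exact GB_aux A M hM0 hB u v h
  · have := GB_aux A M hM0 hB v u h
    rw [norm_sub_rev (GB A v), norm_sub_rev v u, add_comm ‖v‖] at this
    exact this
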